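/- Every twist vector (a,b,c) ∈ ℤ³ is reachable from (0,0,0) by a finite composition of the maps σ₁, σ₂, σ₃, σ₁⁻¹, σ₂⁻¹, σ₃⁻¹ acting on ℚ³. More precisely, using (σ₁σ₂)·(x,y,z)=(z+1,x,y), (σ₂σ₃)·(x,y,z)=(z,x+1,y), (σ₃σ₁)·(x,y,z)=(z,x,y+1) and the analogous inverse pairs decrementing entries, any integer vector lies in the orbit of (0,0,0). -/

import Mathlib

/-- The action of a circular braid generator (`b = true`) or its inverse (`b = false`)
on twist vectors in ℚ³. -/
def gen : Fin 3 × Bool → (ℚ × ℚ × ℚ → ℚ × ℚ × ℚ)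
  | (0, true)  => fun v => (v.2.1 + 1/2, v.1 + 1/2, v.2.2 - 1/2)
  | (1, true)  => fun v => (v.1 - 1/2, v.2.2 + 1/2, v.2.1 + 1/2)
  | (2, true)  => fun v => (v.2.2 + 1/2, v.2.1 - 1/2, v.1 + 1/2)
  | (0, false) => fun v => (v.2.1 - 1/2, v.1 - 1/2, v.2.2 + 1/2)
  | (1, false) => fun v => (v.1 + 1/2, v.2.2 - 1/2, v.2.1 - 1/2)
  | (2, false) => fun v => (v.2.2 - 1/2, v.2.1 + 1/2, v.1 - 1/2)

/-- Apply a word (list of generators and inverses, rightmost letter acting first). -/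
def applyWord (w : List (Fin 3 × Bool)) (v : ℚ × ℚ × ℚ) : ℚ × ℚ × ℚ :=
  w.foldr (fun g u => gen g u) v

lemma applyWord_append (t w : List (Fin 3 × Bool)) (v : ℚ × ℚ × ℚ) :
    applyWord (t ++ w) v = applyWord t (applyWord w v) := by
  simp [applyWord, List.foldr_append]

lemma transA (v : ℚ × ℚ × ℚ) :
    applyWord [(0,true),(2,true),(0,true),(1,false)] v = (v.1 + 1, v.2.1, v.2.2) := by
  obtain ⟨x,y,z⟩ := v
  simp only [applyWord, List.foldr, gen]
  norm_num
  ring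

lemma transA' (v : ℚ × ℚ × ℚ) :
    applyWord [(1,true),(0,false),(2,false),(0,false)] v = (v.1 - 1, v.2.1, v.2.2) := by
  obtain ⟨x,y,z⟩ := v
  simp only [applyWord, List.foldr, gen]
  norm_num
  ring

lemma transB (v : ℚ × ℚ × ℚ) :
    applyWord [(0,true),(1,true),(0,true),(2,false)] v = (v.1, v.2.1 + 1, v.2.2) := by
  obtain ⟨x,y,z⟩ := v
  simp only [applyWord, List.foldr, gen]
  norm_num
  ring

lemma transB' (v : ℚ × ℚ × ℚ) :
    applyWord [(2,true),(0,false),(1,false),(0,false)] v = (v.1, v.2.1 - 1, v.2.2) := by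
  obtain ⟨x,y,z⟩ := v
  simp only [applyWord, List.foldr, gen]
  norm_num
  ring

lemma transC (v : ℚ × ℚ × ℚ) :
    applyWord [(0,true),(1,true),(2,false),(1,true)] v = (v.1, v.2.1, v.2.2 + 1) := by
  obtain ⟨x,y,z⟩ := v
  simp only [applyWord, List.foldr, gen]
  norm_num
  ring

lemma transC' (v : ℚ × ℚ × ℚ) :
    applyWord [(0,true),(1,false),(2,false),(1,false)] v = (v.1, v.2.1, v.2.2 - 1) := by
  obtain ⟨x,y,z⟩ := v
  simp only [applyWord, List.foldr, gen]
  norm_num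
  ring

theorem integer_twist_vectors_reachable (a b c : ℤ) :
    ∃ w : List (Fin 3 × Bool), applyWord w (0, 0, 0) = ((a : ℚ), (b : ℚ), (c : ℚ)) := by
  have key : ∀ c : ℤ, ∃ w, applyWord w (0,0,0) = ((a:ℚ), (b:ℚ), (c:ℚ)) := by
    have base : ∀ b : ℤ, ∃ w, applyWord w (0,0,0) = ((a:ℚ), (b:ℚ), 0) := by
      have base0 : ∀ a : ℤ, ∃ w, applyWord w (0,0,0) = ((a:ℚ), 0, 0) := by
        intro a
        induction a using Int.induction_on with
        | zero => exact ⟨[], rfl⟩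
        | succ n ih =>
            obtain ⟨w, hw⟩ := ih
            exact ⟨_ ++ w, by rw [applyWord_append, hw, transA]; push_cast; ring_nf⟩
        | pred n ih =>
            obtain ⟨w, hw⟩ := ih
            exact ⟨_ ++ w, by rw [applyWord_append, hw, transA']; push_cast; ring_nf⟩
      intro b
      induction b using Int.induction_on with
      | zero => simpa using base0 a
      | succ n ih =>
          obtain ⟨w, hw⟩ := ih
          exact ⟨_ ++ w, by rw [applyWord_append, hw, transB]; push_cast; ring_nf⟩
      | pred n ih =>
          obtain ⟨w, hw⟩ := ih
          exact ⟨_ ++ w, by rw [applyWord_append, hw, transB']; push_cast; ring_nf⟩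
    intro c
    induction c using Int.induction_on with
    | zero => simpa using base b
    | succ n ih =>
        obtain ⟨w, hw⟩ := ih
        exact ⟨_ ++ w, by rw [applyWord_append, hw, transC]; push_cast; ring_nf⟩
    | pred n ih =>
        obtain ⟨w, hw⟩ := ih
        exact ⟨_ ++ w, by rw [applyWord_append, hw, transC']; push_cast; ring_nf⟩
  exact key c
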